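/- For integers d ≥ 3, 0 ≤ j ≤ d, and t ∈ {0,1,2}, define ζ(d,j,t) = Σ_{0 ≤ i ≤ d, i ≡ t (mod 3)} C(d,i) · Σ_{h=0}^{j} (−1)^h · C(i,h) · C(d−i, j−h), and for 1 ≤ j ≤ d define κ(d,j) = (−3)^{⌈j/2⌉ − 1} · C(d,j). Write d = 3r + s with r ≥ 1 an integer and s ∈ {−2, 0, 2}. Then: (1) if (s,t) ∈ {(−2,1), (2,0), (0,2)}, then ζ(d,0,t) = (2^d − (−1)^d)/3 and ζ(d,j,t) = (−1)^r · κ(d,j) for all 1 ≤ j ≤ d; (2) if (s,t) ∈ {(−2,0), (2,2), (0,1)}, then ζ(d,0,t) = (2^d − (−1)^d)/3 and ζ(d,j,t) = (−1)^{r+j} · κ(d,j) for all 1 ≤ j ≤ d; (3) if (s,t) ∈ {(−2,2), (2,1), (0,0)}, then ζ(d,0,t) = (2^d + 2·(−1)^d)/3 and ζ(d,j,t) = (−1)^{r+1} · 2 · κ(d,j) for all even j with 2 ≤ j ≤ d; (4) if (s,t) ∈ {(−2,2), (2,1), (0,0)} and 1 ≤ j ≤ d is odd, then ζ(d,j,t)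 = 0. -/

import Mathlib

/-- `ζ(d,j,t) = Σ_{0 ≤ i ≤ d, i ≡ t (mod 3)} C(d,i) · Σ_{h=0}^{j} (−1)^h C(i,h) C(d−i,j−h)`. -/
def zetaH (d j t : ℕ) : ℤ :=
  ∑ i ∈ (Finset.range (d + 1)).filter (fun i => i % 3 = t),
    (d.choose i : ℤ) *
      ∑ h ∈ Finset.range (j + 1), (-1 : ℤ) ^ h * (i.choose h : ℤ) * ((d - i).choose (j - h) : ℤ)

/-- `κ(d,j) = (−3)^{⌈j/2⌉ − 1} · C(d,j)`. -/
def kappaH (d j : ℕ) : ℤ := (-3 : ℤ) ^ ((j + 1) / 2 - 1) * (d.choose j : ℤ)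

namespace Stmt19Aux

open Finset

lemma trichoose (n m k : ℕ) : n.choose m * (n-m).choose k = n.choose k * (n-k).choose m := by
  by_cases h : m + k ≤ n
  · have h1 := Nat.choose_mul (n := n) (show m ≤ m + k by omega)
    have h2 := Nat.choose_mul (n := n) (show k ≤ m + k by omega)
    rw [Nat.add_sub_cancel_left] at h1
    rw [Nat.add_sub_cancel] at h2
    have hsym : (m+k).choose m = (m+k).choose k := by
      rw [← Nat.choose_symm (show m ≤ m + k by omega), Nat.add_sub_cancel_left]
    rw [← h1, ← h2, hsym]
  · have e1 : n.choose m * (n-m).choose k = 0 := by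
      by_cases hm : m ≤ n
      · rw [Nat.choose_eq_zero_of_lt (show n - m < k by omega), mul_zero]
      · rw [Nat.choose_eq_zero_of_lt (by omega), zero_mul]
    have e2 : n.choose k * (n-k).choose m = 0 := by
      by_cases hk : k ≤ n
      · rw [Nat.choose_eq_zero_of_lt (show n - k < m by omega), mul_zero]
      · rw [Nat.choose_eq_zero_of_lt (by omega), zero_mul]
    rw [e1, e2]

lemma innerSumC (x : ℂ) (d j h : ℕ) (hh : h ≤ j) (hj : j ≤ d) :
    ∑ i ∈ range (d+1), (d.choose i:ℂ) * x^i * ((i.choose h : ℂ) * ((d-i).choose (j-h) : ℂ))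
    = (d.choose h : ℂ) * ((d-h).choose (j-h) : ℂ) * x^h * (1+x)^(d-j) := by
  have step1 : ∑ i ∈ range (d+1), (d.choose i:ℂ) * x^i * ((i.choose h : ℂ) * ((d-i).choose (j-h) : ℂ))
      = ∑ i ∈ Ico h (d+1), (d.choose i:ℂ) * x^i * ((i.choose h : ℂ) * ((d-i).choose (j-h) : ℂ)) := by
    apply (Finset.sum_subset ?_ ?_).symm
    · intro i hi
      simp only [mem_Ico, mem_range] at *
      omega
    · intro i hi hni
      have hih : i < h := by
        simp only [mem_Ico, mem_range] at *
        omega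
      simp [Nat.choose_eq_zero_of_lt hih]
  rw [step1, Finset.sum_Ico_eq_sum_range]
  have step2 : ∀ m ∈ range (d+1-h),
      (d.choose (h+m):ℂ) * x^(h+m) * (((h+m).choose h : ℂ) * ((d-(h+m)).choose (j-h) : ℂ))
      = (d.choose h : ℂ) * ((d-h).choose (j-h) : ℂ) * x^h * (((d-j).choose m : ℂ) * x^m) := by
    intro m hm
    have hm' : m ≤ d - h := by simp only [mem_range] at hm; omega
    have n1 : d.choose (h+m) * (h+m).choose h = d.choose h * (d-h).choose m := by
      have := Nat.choose_mul (n := d) (show h ≤ h + m by omega)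
      rwa [Nat.add_sub_cancel_left] at this
    have n2 : (d-h).choose m * ((d-h)-m).choose (j-h) = (d-h).choose (j-h) * ((d-h)-(j-h)).choose m :=
      trichoose (d-h) m (j-h)
    have e1 : d - (h+m) = (d-h) - m := by omega
    have e2 : (d-h)-(j-h) = d - j := by omega
    rw [e1] at *
    have big : d.choose (h+m) * ((h+m).choose h * (((d-h)-m)).choose (j-h))
        = d.choose h * ((d-h).choose (j-h) * (d-j).choose m) := by
      rw [← mul_assoc, n1, mul_assoc, n2, e2, ← mul_assoc, mul_assoc]
    have bigC : (d.choose (h+m):ℂ) * (((h+m).choose h:ℂ) * ((((d-h)-m)).choose (j-h):ℂ))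
        = (d.choose h:ℂ) * (((d-h).choose (j-h):ℂ) * ((d-j).choose m:ℂ)) := by
      exact_mod_cast congrArg (Nat.cast : ℕ → ℂ) big
    calc (d.choose (h+m):ℂ) * x^(h+m) * (((h+m).choose h : ℂ) * (((d-h)-m).choose (j-h) : ℂ))
        = ((d.choose (h+m):ℂ) * (((h+m).choose h:ℂ) * ((((d-h)-m)).choose (j-h):ℂ))) * (x^h * x^m) := by
          rw [pow_add]; ring
      _ = ((d.choose h:ℂ) * (((d-h).choose (j-h):ℂ) * ((d-j).choose m:ℂ))) * (x^h * x^m) := by rw [bigC]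
      _ = (d.choose h : ℂ) * ((d-h).choose (j-h) : ℂ) * x^h * (((d-j).choose m : ℂ) * x^m) := by ring
  rw [Finset.sum_congr rfl step2, ← Finset.mul_sum]
  have step3 : ∑ m ∈ range (d+1-h), ((d-j).choose m : ℂ) * x^m = (1+x)^(d-j) := by
    have hsub : range ((d-j)+1) ⊆ range (d+1-h) := by
      intro m hm; simp only [mem_range] at *; omega
    rw [← Finset.sum_subset hsub (by
      intro m hm hnm
      have : d - j < m := by simp only [mem_range] at *; omega
      simp [Nat.choose_eq_zero_of_lt this])]
    rw [add_comm (1:ℂ) x, add_pow]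
    exact Finset.sum_congr rfl fun m hm => by rw [one_pow]; ring
  rw [step3]

lemma key (x : ℂ) (d j : ℕ) (hj : j ≤ d) :
    ∑ i ∈ range (d+1), (d.choose i : ℂ) * x^i *
      ∑ h ∈ range (j+1), (-1:ℂ)^h * (i.choose h : ℂ) * ((d-i).choose (j-h) : ℂ)
    = (d.choose j : ℂ) * (1-x)^j * (1+x)^(d-j) := by
  have swap : ∑ i ∈ range (d+1), (d.choose i : ℂ) * x^i *
      ∑ h ∈ range (j+1), (-1:ℂ)^h * (i.choose h : ℂ) * ((d-i).choose (j-h) : ℂ)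
      = ∑ h ∈ range (j+1), (-1:ℂ)^h *
          ∑ i ∈ range (d+1), (d.choose i:ℂ) * x^i * ((i.choose h : ℂ) * ((d-i).choose (j-h) : ℂ)) := by
    calc ∑ i ∈ range (d+1), (d.choose i : ℂ) * x^i *
        ∑ h ∈ range (j+1), (-1:ℂ)^h * (i.choose h : ℂ) * ((d-i).choose (j-h) : ℂ)
        = ∑ i ∈ range (d+1), ∑ h ∈ range (j+1),
            (d.choose i : ℂ) * x^i * ((-1:ℂ)^h * (i.choose h : ℂ) * ((d-i).choose (j-h) : ℂ)) :=
          Finset.sum_congr rfl fun i _ => Finset.mul_sum _ _ _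
      _ = ∑ h ∈ range (j+1), ∑ i ∈ range (d+1),
            (d.choose i : ℂ) * x^i * ((-1:ℂ)^h * (i.choose h : ℂ) * ((d-i).choose (j-h) : ℂ)) :=
          Finset.sum_comm ..
      _ = ∑ h ∈ range (j+1), (-1:ℂ)^h *
            ∑ i ∈ range (d+1), (d.choose i:ℂ) * x^i * ((i.choose h : ℂ) * ((d-i).choose (j-h) : ℂ)) := by
          refine Finset.sum_congr rfl fun h _ => ?_
          rw [Finset.mul_sum]
          exact Finset.sum_congr rfl fun i _ => by ring
  rw [swap]
  have per : ∀ h ∈ range (j+1), (-1:ℂ)^h *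
      ∑ i ∈ range (d+1), (d.choose i:ℂ) * x^i * ((i.choose h : ℂ) * ((d-i).choose (j-h) : ℂ))
      = (d.choose j : ℂ) * ((j.choose h : ℂ) * (-x)^h) * (1+x)^(d-j) := by
    intro h hhm
    have hh : h ≤ j := by simp only [mem_range] at hhm; omega
    rw [innerSumC x d j h hh hj]
    have n3 : d.choose j * j.choose h = d.choose h * (d-h).choose (j-h) := Nat.choose_mul (n := d) hh
    have n3C : (d.choose j : ℂ) * (j.choose h : ℂ) = (d.choose h:ℂ) * ((d-h).choose (j-h):ℂ) := by
      exact_mod_cast congrArg (Nat.cast : ℕ → ℂ) n3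
    rw [← n3C, neg_pow]
    ring
  rw [Finset.sum_congr rfl per, ← Finset.sum_mul, ← Finset.mul_sum]
  congr 1
  rw [show (1:ℂ) - x = -x + 1 by ring, add_pow]
  congr 1
  exact Finset.sum_congr rfl fun m hm => by rw [one_pow]; ring

noncomputable def ww : ℂ := (-1 + Real.sqrt 3 * Complex.I) / 2

lemma hww : ww^2 + ww + 1 = 0 := by
  have h3 : ((Real.sqrt 3 : ℝ) : ℂ)^2 = 3 := by
    norm_cast
    rw [Real.sq_sqrt]; norm_num
  unfold ww
  linear_combination (((Real.sqrt 3:ℝ):ℂ)^2/4) * Complex.I_sq - (1/4) * h3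

lemma hw3 : ww^3 = 1 := by linear_combination (ww - 1) * hww

lemma hwp (n : ℕ) : ww^n = ww^(n % 3) := by
  conv_lhs => rw [← Nat.div_add_mod n 3]
  rw [pow_add, pow_mul, hw3, one_pow, one_mul]

lemma negp (n : ℕ) : (-1:ℂ)^n = (-1)^(n % 2) := by
  conv_lhs => rw [← Nat.div_add_mod n 2]
  rw [pow_add, pow_mul, neg_one_sq, one_pow, one_mul]

lemma negpZ (a b : ℕ) (h : a % 2 = b % 2) : (-1:ℤ)^a = (-1)^b := by
  conv_lhs => rw [← Nat.div_add_mod a 2]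
  conv_rhs => rw [← Nat.div_add_mod b 2]
  rw [pow_add, pow_add, pow_mul, pow_mul, neg_one_sq, one_pow, one_pow, one_mul, one_mul, h]

lemma sumroots (n : ℕ) : ∑ a ∈ range 3, ww^(a*n) = if n % 3 = 0 then 3 else 0 := by
  rw [Finset.sum_range_succ, Finset.sum_range_succ, Finset.sum_range_one]
  rw [zero_mul, pow_zero, one_mul, hwp n, hwp (2*n)]
  have h : n % 3 = 0 ∨ n % 3 = 1 ∨ n % 3 = 2 := by omega
  rcases h with h | h | h
  · rw [if_pos h, show n % 3 = 0 from h, show (2*n) % 3 = 0 by omega]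
    norm_num
  · rw [if_neg (by omega), show n % 3 = 1 from h, show (2*n) % 3 = 2 by omega]
    linear_combination hww
  · rw [if_neg (by omega), show n % 3 = 2 from h, show (2*n) % 3 = 1 by omega]
    linear_combination hww

lemma hs1 : (1-ww)^2 = -3*ww := by linear_combination hww
lemma hs2 : (1-ww^2)^2 = -3*ww^2 := by linear_combination (1 + ww^2 - ww) * hww
lemma h1p : 1+ww = -ww^2 := by linear_combination hww
lemma h2p : 1+ww^2 = -ww := by linear_combination hww

lemma master (d j t : ℕ) (hj : j ≤ d) (ht : t ≤ 2) :
    (3:ℂ) * (zetaH d j t : ℂ)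
    = (d.choose j : ℂ) * ∑ a ∈ range 3, ww^(a*(3-t)) * (1-ww^a)^j * (1+ww^a)^(d-j) := by
  have key2 : ∀ a : ℕ, (d.choose j:ℂ) * (ww^(a*(3-t)) * (1-ww^a)^j * (1+ww^a)^(d-j))
      = ∑ i ∈ range (d+1), ww^(a*((3-t)+i)) * ((d.choose i : ℂ) *
          ∑ h ∈ range (j+1), (-1:ℂ)^h * (i.choose h : ℂ) * ((d-i).choose (j-h) : ℂ)) := by
    intro a
    rw [show (d.choose j:ℂ) * (ww^(a*(3-t)) * (1-ww^a)^j * (1+ww^a)^(d-j))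
        = ww^(a*(3-t)) * ((d.choose j:ℂ) * (1-ww^a)^j * (1+ww^a)^(d-j)) from by ring,
      ← key (ww^a) d j hj, Finset.mul_sum]
    refine Finset.sum_congr rfl fun i _ => ?_
    rw [Nat.mul_add, pow_add, pow_mul]
    ring
  calc (3:ℂ) * (zetaH d j t : ℂ)
      = ∑ i ∈ range (d+1), (if ((3-t)+i) % 3 = 0 then (3:ℂ) else 0) * ((d.choose i : ℂ) *
          ∑ h ∈ range (j+1), (-1:ℂ)^h * (i.choose h : ℂ) * ((d-i).choose (j-h) : ℂ)) := by
        rw [zetaH]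
        push_cast
        rw [Finset.sum_filter, Finset.mul_sum]
        refine Finset.sum_congr rfl fun i _ => ?_
        by_cases hc : i % 3 = t
        · rw [if_pos hc, if_pos (show ((3-t)+i)%3 = 0 by omega)]
        · rw [if_neg hc, if_neg (show ¬((3-t)+i)%3 = 0 by omega), mul_zero, zero_mul]
    _ = ∑ i ∈ range (d+1), ∑ a ∈ range 3, ww^(a*((3-t)+i)) * ((d.choose i : ℂ) *
          ∑ h ∈ range (j+1), (-1:ℂ)^h * (i.choose h : ℂ) * ((d-i).choose (j-h) : ℂ)) := by
        refine Finset.sum_congr rfl fun i _ => ?_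
        rw [← sumroots ((3-t)+i), Finset.sum_mul]
    _ = ∑ a ∈ range 3, ∑ i ∈ range (d+1), ww^(a*((3-t)+i)) * ((d.choose i : ℂ) *
          ∑ h ∈ range (j+1), (-1:ℂ)^h * (i.choose h : ℂ) * ((d-i).choose (j-h) : ℂ)) :=
        Finset.sum_comm ..
    _ = (d.choose j : ℂ) * ∑ a ∈ range 3, ww^(a*(3-t)) * (1-ww^a)^j * (1+ww^a)^(d-j) := by
        rw [Finset.mul_sum]
        exact Finset.sum_congr rfl fun a _ => (key2 a).symm

lemma TEven (d t u : ℕ) (h2u : 2*u ≤ d) (ht : t ≤ 2) :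
    ww^(1*(3-t)) * (1-ww^1)^(2*u) * (1+ww^1)^(d-2*u)
      + ww^(2*(3-t)) * (1-ww^2)^(2*u) * (1+ww^2)^(d-2*u)
    = (-3:ℂ)^u * (-1)^d * (if (d+t)%3 = 0 then 2 else -1) := by
  rw [pow_one]
  have A1 : (1-ww)^(2*u) = (-3:ℂ)^u * ww^u := by rw [pow_mul, hs1, mul_pow]
  have A2 : (1-ww^2)^(2*u) = (-3:ℂ)^u * ww^(2*u) := by rw [pow_mul, hs2, mul_pow, ← pow_mul]
  have B1 : (1+ww)^(d-2*u) = (-1:ℂ)^(d-2*u) * ww^(2*(d-2*u)) := by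
    rw [h1p, neg_pow, ← pow_mul, Nat.mul_comm]
  have B2 : (1+ww^2)^(d-2*u) = (-1:ℂ)^(d-2*u) * ww^(d-2*u) := by rw [h2p, neg_pow]
  have hsgn : (-1:ℂ)^(d-2*u) = (-1)^d := by rw [negp (d-2*u), negp d]; congr 1; omega
  rw [A1, A2, B1, B2, hsgn]
  have C1 : ww^(1*(3-t)) * ((-3:ℂ)^u * ww^u) * ((-1:ℂ)^d * ww^(2*(d-2*u)))
      = (-3:ℂ)^u * (-1)^d * ww^(1*(3-t) + u + 2*(d-2*u)) := by
    rw [pow_add, pow_add]; ring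
  have C2 : ww^(2*(3-t)) * ((-3:ℂ)^u * ww^(2*u)) * ((-1:ℂ)^d * ww^(d-2*u))
      = (-3:ℂ)^u * (-1)^d * ww^(2*(3-t) + 2*u + (d-2*u)) := by
    rw [pow_add, pow_add]; ring
  rw [C1, C2, hwp (1*(3-t) + u + 2*(d-2*u)), hwp (2*(3-t) + 2*u + (d-2*u))]
  rcases (show (d+t)%3 = 0 ∨ (d+t)%3 = 1 ∨ (d+t)%3 = 2 by omega) with hm|hm|hm
  · rw [show (1*(3-t) + u + 2*(d-2*u))%3 = 0 by omega,
      show (2*(3-t) + 2*u + (d-2*u))%3 = 0 by omega, if_pos hm]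
    rw [pow_zero]; ring
  · rw [show (1*(3-t) + u + 2*(d-2*u))%3 = 2 by omega,
      show (2*(3-t) + 2*u + (d-2*u))%3 = 1 by omega, if_neg (by omega)]
    linear_combination ((-3:ℂ)^u * (-1)^d) * hww
  · rw [show (1*(3-t) + u + 2*(d-2*u))%3 = 1 by omega,
      show (2*(3-t) + 2*u + (d-2*u))%3 = 2 by omega, if_neg (by omega)]
    linear_combination ((-3:ℂ)^u * (-1)^d) * hww

lemma TOdd (d t u : ℕ) (h2u : 2*u+1 ≤ d) (ht : t ≤ 2) :
    ww^(1*(3-t)) * (1-ww^1)^(2*u+1) * (1+ww^1)^(d-(2*u+1))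
      + ww^(2*(3-t)) * (1-ww^2)^(2*u+1) * (1+ww^2)^(d-(2*u+1))
    = (-3:ℂ)^u * (-1)^(d+1) * (if (d+t)%3 = 0 then 0 else if (d+t)%3 = 1 then 3 else -3) := by
  rw [pow_one]
  have A1 : (1-ww)^(2*u+1) = (-3:ℂ)^u * ww^u * (1-ww) := by
    rw [pow_succ, pow_mul, hs1, mul_pow]
  have A2 : (1-ww^2)^(2*u+1) = (-3:ℂ)^u * ww^(2*u) * (1-ww^2) := by
    rw [pow_succ, pow_mul, hs2, mul_pow, ← pow_mul]
  have B1 : (1+ww)^(d-(2*u+1)) = (-1:ℂ)^(d-(2*u+1)) * ww^(2*(d-(2*u+1))) := by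
    rw [h1p, neg_pow, ← pow_mul, Nat.mul_comm]
  have B2 : (1+ww^2)^(d-(2*u+1)) = (-1:ℂ)^(d-(2*u+1)) * ww^(d-(2*u+1)) := by rw [h2p, neg_pow]
  have hsgn : (-1:ℂ)^(d-(2*u+1)) = (-1)^(d+1) := by
    rw [negp (d-(2*u+1)), negp (d+1)]; congr 1; omega
  rw [A1, A2, B1, B2, hsgn]
  have C1 : ww^(1*(3-t)) * ((-3:ℂ)^u * ww^u * (1-ww)) * ((-1:ℂ)^(d+1) * ww^(2*(d-(2*u+1))))
      = (-3:ℂ)^u * (-1)^(d+1) * ((1-ww) * ww^(1*(3-t) + u + 2*(d-(2*u+1)))) := by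
    rw [pow_add, pow_add]; ring
  have C2 : ww^(2*(3-t)) * ((-3:ℂ)^u * ww^(2*u) * (1-ww^2)) * ((-1:ℂ)^(d+1) * ww^(d-(2*u+1)))
      = (-3:ℂ)^u * (-1)^(d+1) * ((1-ww^2) * ww^(2*(3-t) + 2*u + (d-(2*u+1)))) := by
    rw [pow_add, pow_add]; ring
  rw [C1, C2, hwp (1*(3-t) + u + 2*(d-(2*u+1))), hwp (2*(3-t) + 2*u + (d-(2*u+1)))]
  rcases (show (d+t)%3 = 0 ∨ (d+t)%3 = 1 ∨ (d+t)%3 = 2 by omega) with hm|hm|hm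
  · rw [show (1*(3-t) + u + 2*(d-(2*u+1)))%3 = 1 by omega,
      show (2*(3-t) + 2*u + (d-(2*u+1)))%3 = 2 by omega, if_pos hm]
    linear_combination ((-3:ℂ)^u * (-1:ℂ)^(d+1) * (ww - ww^2)) * hww
  · rw [show (1*(3-t) + u + 2*(d-(2*u+1)))%3 = 0 by omega,
      show (2*(3-t) + 2*u + (d-(2*u+1)))%3 = 0 by omega, if_neg (by omega), if_pos hm]
    linear_combination (-(-3:ℂ)^u * (-1:ℂ)^(d+1)) * hww
  · rw [show (1*(3-t) + u + 2*(d-(2*u+1)))%3 = 2 by omega,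
      show (2*(3-t) + 2*u + (d-(2*u+1)))%3 = 1 by omega, if_neg (by omega), if_neg (by omega)]
    linear_combination ((-3:ℂ)^u * (-1:ℂ)^(d+1) * (3 - 2*ww)) * hww

lemma sum_val (d j t : ℕ) (hj : j ≤ d) (ht : t ≤ 2) :
    ∑ a ∈ range 3, ww^(a*(3-t)) * (1-ww^a)^j * (1+ww^a)^(d-j)
    = (if j = 0 then (2:ℂ)^d else 0)
      + (if j % 2 = 0 then (-3:ℂ)^(j/2) * (-1)^d * (if (d+t)%3 = 0 then 2 else -1)
         else (-3:ℂ)^(j/2) * (-1)^(d+1) * (if (d+t)%3 = 0 then 0 else if (d+t)%3 = 1 then 3 else -3)) := by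
  simp only [Finset.sum_range_succ, Finset.sum_range_zero, zero_add]
  have a0 : ww^(0*(3-t)) * (1-ww^0)^j * (1+ww^0)^(d-j) = (if j = 0 then (2:ℂ)^d else 0) := by
    rw [Nat.zero_mul, pow_zero]
    by_cases h0 : j = 0
    · subst h0; rw [if_pos rfl]; norm_num
    · rw [if_neg h0, sub_self, zero_pow h0, mul_zero, zero_mul]
  rw [add_assoc, a0]
  congr 1
  rcases Nat.even_or_odd j with ⟨u,hu⟩|⟨u,hu⟩
  · have hj2 : j = 2*u := by omega
    subst hj2
    rw [TEven d t u (by omega) ht, if_pos (show (2*u) % 2 = 0 by omega), show (2*u)/2 = u by omega]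
  · have hj2 : j = 2*u+1 := by omega
    subst hj2
    rw [TOdd d t u (by omega) ht, if_neg (show ¬((2*u+1) % 2 = 0) by omega),
      show (2*u+1)/2 = u by omega]

lemma zeta3 (d j t : ℕ) (hj : j ≤ d) (ht : t ≤ 2) (W : ℤ)
    (h : (d.choose j : ℂ) * ((if j = 0 then (2:ℂ)^d else 0)
      + (if j % 2 = 0 then (-3:ℂ)^(j/2) * (-1)^d * (if (d+t)%3 = 0 then 2 else -1)
         else (-3:ℂ)^(j/2) * (-1)^(d+1) * (if (d+t)%3 = 0 then 0 else if (d+t)%3 = 1 then 3 else -3)))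
      = ((W:ℤ):ℂ)) :
    3 * zetaH d j t = W := by
  have hm := master d j t hj ht
  rw [sum_val d j t hj ht, h] at hm
  exact_mod_cast hm

lemma bullet12zero (d t : ℕ) (ht : t ≤ 2) (hm : (d+t)%3 ≠ 0) :
    zetaH d 0 t = (2^d - (-1:ℤ)^d)/3 := by
  have h3 : 3 * zetaH d 0 t = 2^d - (-1:ℤ)^d := by
    apply zeta3 d 0 t (by omega) ht
    rw [if_pos rfl, if_pos (show 0 % 2 = 0 from rfl), if_neg hm, Nat.choose_zero_right]
    push_cast
    norm_num
    ring
  rw [← h3, Int.mul_ediv_cancel_left _ (by norm_num)]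

lemma bullet3zero (d t : ℕ) (ht : t ≤ 2) (hm : (d+t)%3 = 0) :
    zetaH d 0 t = (2^d + 2*(-1:ℤ)^d)/3 := by
  have h3 : 3 * zetaH d 0 t = 2^d + 2*(-1:ℤ)^d := by
    apply zeta3 d 0 t (by omega) ht
    rw [if_pos rfl, if_pos (show 0 % 2 = 0 from rfl), if_pos hm, Nat.choose_zero_right]
    push_cast
    norm_num
    ring
  rw [← h3, Int.mul_ediv_cancel_left _ (by norm_num)]

lemma VE (d u t : ℕ) (hu : 1 ≤ u) (hj : 2*u ≤ d) (ht : t ≤ 2) (hm : (d+t)%3 ≠ 0) :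
    zetaH d (2*u) t = (-1:ℤ)^d * ((-3)^(u-1) * (d.choose (2*u) : ℤ)) := by
  refine mul_left_cancel₀ (show (3:ℤ) ≠ 0 by norm_num) (zeta3 d (2*u) t hj ht _ ?_)
  rw [if_neg (show ¬(2*u = 0) by omega), if_pos (show (2*u) % 2 = 0 by omega),
    if_neg hm, show (2*u)/2 = u by omega,
    show ((-3:ℂ))^u = (-3)^(u-1) * (-3) from by rw [← pow_succ]; congr 1; omega]
  push_cast
  ring

lemma VE0 (d u t : ℕ) (hu : 1 ≤ u) (hj : 2*u ≤ d) (ht : t ≤ 2) (hm : (d+t)%3 = 0) :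
    zetaH d (2*u) t = (-1:ℤ)^(d+1) * 2 * ((-3)^(u-1) * (d.choose (2*u) : ℤ)) := by
  refine mul_left_cancel₀ (show (3:ℤ) ≠ 0 by norm_num) (zeta3 d (2*u) t hj ht _ ?_)
  rw [if_neg (show ¬(2*u = 0) by omega), if_pos (show (2*u) % 2 = 0 by omega),
    if_pos hm, show (2*u)/2 = u by omega,
    show ((-3:ℂ))^u = (-3)^(u-1) * (-3) from by rw [← pow_succ]; congr 1; omega]
  push_cast
  ring

lemma VO1 (d u t : ℕ) (hj : 2*u+1 ≤ d) (ht : t ≤ 2) (hm : (d+t)%3 = 1) :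
    zetaH d (2*u+1) t = (-1:ℤ)^(d+1) * ((-3)^u * (d.choose (2*u+1) : ℤ)) := by
  refine mul_left_cancel₀ (show (3:ℤ) ≠ 0 by norm_num) (zeta3 d (2*u+1) t hj ht _ ?_)
  rw [if_neg (show ¬(2*u+1 = 0) by omega), if_neg (show ¬((2*u+1) % 2 = 0) by omega),
    if_neg (by omega), if_pos hm, show (2*u+1)/2 = u by omega]
  push_cast
  ring

lemma VO2 (d u t : ℕ) (hj : 2*u+1 ≤ d) (ht : t ≤ 2) (hm : (d+t)%3 = 2) :
    zetaH d (2*u+1) t = (-1:ℤ)^d * ((-3)^u * (d.choose (2*u+1) : ℤ)) := by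
  refine mul_left_cancel₀ (show (3:ℤ) ≠ 0 by norm_num) (zeta3 d (2*u+1) t hj ht _ ?_)
  rw [if_neg (show ¬(2*u+1 = 0) by omega), if_neg (show ¬((2*u+1) % 2 = 0) by omega),
    if_neg (by omega), if_neg (by omega), show (2*u+1)/2 = u by omega]
  push_cast
  ring

lemma VO0 (d u t : ℕ) (hj : 2*u+1 ≤ d) (ht : t ≤ 2) (hm : (d+t)%3 = 0) :
    zetaH d (2*u+1) t = 0 := by
  have h3 : 3 * zetaH d (2*u+1) t = 0 := by
    apply zeta3 d (2*u+1) t hj ht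
    rw [if_neg (show ¬(2*u+1 = 0) by omega), if_neg (show ¬((2*u+1) % 2 = 0) by omega),
      if_pos hm]
    push_cast
    ring
  omega

lemma bullet1j (d t : ℕ) (ht : t ≤ 2) (hm : (d+t)%3 = 2) :
    ∀ j, 1 ≤ j → j ≤ d → zetaH d j t = (-1:ℤ)^d * kappaH d j := by
  intro j h1 h2
  rcases Nat.even_or_odd j with ⟨u,hu⟩|⟨u,hu⟩
  · have hju : j = 2*u := by omega
    subst hju
    rw [kappaH, show (2*u+1)/2 - 1 = u - 1 by omega]
    exact VE d u t (by omega) (by omega) ht (by omega)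
  · subst hu
    rw [kappaH, show (2*u+1+1)/2 - 1 = u by omega]
    exact VO2 d u t (by omega) ht hm

lemma bullet2j (d t : ℕ) (ht : t ≤ 2) (hm : (d+t)%3 = 1) :
    ∀ j, 1 ≤ j → j ≤ d → zetaH d j t = (-1:ℤ)^(d+j) * kappaH d j := by
  intro j h1 h2
  rcases Nat.even_or_odd j with ⟨u,hu⟩|⟨u,hu⟩
  · have hju : j = 2*u := by omega
    subst hju
    rw [kappaH, show (2*u+1)/2 - 1 = u - 1 by omega,
      show ((-1:ℤ))^(d+2*u) = (-1)^d from negpZ _ _ (by omega)]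
    exact VE d u t (by omega) (by omega) ht (by omega)
  · subst hu
    rw [kappaH, show (2*u+1+1)/2 - 1 = u by omega,
      show ((-1:ℤ))^(d+(2*u+1)) = (-1)^(d+1) from negpZ _ _ (by omega)]
    exact VO1 d u t (by omega) ht hm

lemma bullet3j (d t : ℕ) (ht : t ≤ 2) (hm : (d+t)%3 = 0) :
    ∀ j, 2 ≤ j → j ≤ d → Even j → zetaH d j t = (-1:ℤ)^(d+1) * 2 * kappaH d j := by
  intro j h1 h2 hev
  obtain ⟨u, hu⟩ := hev
  have hju : j = 2*u := by omega
  subst hju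
  rw [kappaH, show (2*u+1)/2 - 1 = u - 1 by omega]
  exact VE0 d u t (by omega) (by omega) ht hm

lemma bullet4j (d t : ℕ) (ht : t ≤ 2) (hm : (d+t)%3 = 0) :
    ∀ j, 1 ≤ j → j ≤ d → Odd j → zetaH d j t = 0 := by
  intro j h1 h2 hod
  obtain ⟨u, hu⟩ := hod
  subst hu
  exact VO0 d u t (by omega) ht hm

end Stmt19Aux

open Stmt19Aux in
/-- Write `d = 3r + s` with `r ≥ 1` and `s ∈ {−2, 0, 2}`, and let
`t ∈ {0,1,2}`.  Then:
(1) if `(s,t) ∈ {(−2,1),(2,0),(0,2)}`, `ζ(d,0,t) = (2^d − (−1)^d)/3` and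
`ζ(d,j,t) = (−1)^r κ(d,j)` for `1 ≤ j ≤ d`;
(2) if `(s,t) ∈ {(−2,0),(2,2),(0,1)}`, `ζ(d,0,t) = (2^d − (−1)^d)/3` and
`ζ(d,j,t) = (−1)^{r+j} κ(d,j)` for `1 ≤ j ≤ d`;
(3) if `(s,t) ∈ {(−2,2),(2,1),(0,0)}`, `ζ(d,0,t) = (2^d + 2·(−1)^d)/3` and
`ζ(d,j,t) = (−1)^{r+1}·2·κ(d,j)` for even `2 ≤ j ≤ d`;
(4) if `(s,t) ∈ {(−2,2),(2,1),(0,0)}` and `1 ≤ j ≤ d` is odd, `ζ(d,j,t) = 0`. -/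
theorem stmt_19 (d : ℕ) (hd : 3 ≤ d) (t : ℕ) (ht : t ≤ 2) (r : ℕ) (s : ℤ)
    (hr : 1 ≤ r) (hs : s = -2 ∨ s = 0 ∨ s = 2) (hds : (d : ℤ) = 3 * r + s) :
    (((s = -2 ∧ t = 1) ∨ (s = 2 ∧ t = 0) ∨ (s = 0 ∧ t = 2)) →
      zetaH d 0 t = (2 ^ d - (-1 : ℤ) ^ d) / 3 ∧
      ∀ j, 1 ≤ j → j ≤ d → zetaH d j t = (-1 : ℤ) ^ r * kappaH d j) ∧
    (((s = -2 ∧ t = 0) ∨ (s = 2 ∧ t = 2) ∨ (s = 0 ∧ t = 1)) →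
      zetaH d 0 t = (2 ^ d - (-1 : ℤ) ^ d) / 3 ∧
      ∀ j, 1 ≤ j → j ≤ d → zetaH d j t = (-1 : ℤ) ^ (r + j) * kappaH d j) ∧
    (((s = -2 ∧ t = 2) ∨ (s = 2 ∧ t = 1) ∨ (s = 0 ∧ t = 0)) →
      zetaH d 0 t = (2 ^ d + 2 * (-1 : ℤ) ^ d) / 3 ∧
      ∀ j, 2 ≤ j → j ≤ d → Even j → zetaH d j t = (-1 : ℤ) ^ (r + 1) * 2 * kappaH d j) ∧
    (((s = -2 ∧ t = 2) ∨ (s = 2 ∧ t = 1) ∨ (s = 0 ∧ t = 0)) →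
      ∀ j, 1 ≤ j → j ≤ d → Odd j → zetaH d j t = 0) := by
  refine ⟨?_, ?_, ?_, ?_⟩
  · rintro (⟨hs', ht'⟩|⟨hs', ht'⟩|⟨hs', ht'⟩) <;> subst ht' <;> subst hs' <;>
      exact ⟨bullet12zero d _ (by norm_num) (by omega),
        fun j h1 h2 => by
          rw [show ((-1:ℤ))^r = (-1)^d from negpZ r d (by omega)]
          exact bullet1j d _ (by norm_num) (by omega) j h1 h2⟩
  · rintro (⟨hs', ht'⟩|⟨hs', ht'⟩|⟨hs', ht'⟩) <;> subst ht' <;> subst hs' <;>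
      exact ⟨bullet12zero d _ (by norm_num) (by omega),
        fun j h1 h2 => by
          rw [show ((-1:ℤ))^(r+j) = (-1)^(d+j) from negpZ _ _ (by omega)]
          exact bullet2j d _ (by norm_num) (by omega) j h1 h2⟩
  · rintro (⟨hs', ht'⟩|⟨hs', ht'⟩|⟨hs', ht'⟩) <;> subst ht' <;> subst hs' <;>
      exact ⟨bullet3zero d _ (by norm_num) (by omega),
        fun j h1 h2 hev => by
          rw [show ((-1:ℤ))^(r+1) = (-1)^(d+1) from negpZ _ _ (by omega)]
          exact bullet3j d _ (by norm_num) (by omega) j h1 h2 hev⟩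
  · rintro (⟨hs', ht'⟩|⟨hs', ht'⟩|⟨hs', ht'⟩) <;> subst ht' <;> subst hs' <;>
      exact fun j h1 h2 hod => bullet4j d _ (by norm_num) (by omega) j h1 h2 hod
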